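/- (Finite fractal dimension via smoothing) Let E₁ be a Banach space compactly embedded in a Banach space E, let X ⊆ E₁ be compact, and let L : X → X satisfy L(X) = X and ‖Lx₁ − Lx₂‖_{E₁} ≤ α ‖x₁ − x₂‖_E for all x₁, x₂ ∈ X and some α > 0. Then the fractal (box-counting) dimension of X in E is finite and satisfies dim_F X ≤ H_{1/(4α)}(B_{E₁}), where H_ε(B_{E₁}) = log₂ N_ε(B_{E₁}) is the Kolmogorov ε-entropy of the unit ball B_{E₁} of E₁ viewed as a relatively compact subset of E. -/

import Mathlib

open Filter
open Metric

/-- The minimal number of `ε`-balls (in the metric of `E`) needed to cover `S`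
(the junk value `0` is obtained when no finite cover exists). -/
noncomputable def coveringNumber {E : Type*} [PseudoMetricSpace E] (ε : ℝ) (S : Set E) : ℕ :=
  sInf {n : ℕ | ∃ t : Finset E, t.card = n ∧ S ⊆ ⋃ x ∈ t, Metric.ball x ε}

lemma coveringNumber_le_card {E : Type*} [PseudoMetricSpace E] {ε : ℝ} {S : Set E}
    {t : Finset E} (h : S ⊆ ⋃ x ∈ t, Metric.ball x ε) : coveringNumber ε S ≤ t.card :=
  Nat.sInf_le ⟨t, rfl, h⟩

lemma coverSet_nonempty {E : Type*} [PseudoMetricSpace E] {ε : ℝ} {S : Set E}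
    (hS : TotallyBounded S) (hε : 0 < ε) :
    {n : ℕ | ∃ t : Finset E, t.card = n ∧ S ⊆ ⋃ x ∈ t, Metric.ball x ε}.Nonempty := by
  obtain ⟨t, htf, hts⟩ := Metric.totallyBounded_iff.1 hS ε hε
  exact ⟨htf.toFinset.card, htf.toFinset, rfl, by simpa [htf] using hts⟩

lemma exists_min_cover {E : Type*} [PseudoMetricSpace E] {ε : ℝ} {S : Set E}
    (hS : TotallyBounded S) (hε : 0 < ε) :
    ∃ t : Finset E, t.card = coveringNumber ε S ∧ S ⊆ ⋃ x ∈ t, Metric.ball x ε :=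
  Nat.sInf_mem (coverSet_nonempty hS hε)

lemma one_le_coveringNumber {E : Type*} [PseudoMetricSpace E] {ε : ℝ} {S : Set E}
    (hS : TotallyBounded S) (hε : 0 < ε) (hne : S.Nonempty) : 1 ≤ coveringNumber ε S := by
  obtain ⟨t, htc, hts⟩ := exists_min_cover hS hε
  rcases t.eq_empty_or_nonempty with rfl | ht
  · obtain ⟨x, hx⟩ := hne
    simpa using hts hx
  · exact htc ▸ Finset.card_pos.2 ht

lemma coveringNumber_antitone {E : Type*} [PseudoMetricSpace E] {ε ε' : ℝ} {S : Set E}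
    (hS : TotallyBounded S) (hε : 0 < ε) (h : ε ≤ ε') :
    coveringNumber ε' S ≤ coveringNumber ε S := by
  obtain ⟨t, htc, hts⟩ := exists_min_cover hS hε
  refine htc ▸ coveringNumber_le_card (hts.trans ?_)
  exact Set.iUnion₂_mono fun x _ => Metric.ball_subset_ball h

section key
variable {E₁ E : Type*}
    [NormedAddCommGroup E₁] [NormedSpace ℝ E₁]
    [NormedAddCommGroup E] [NormedSpace ℝ E]

lemma key_step (ι : E₁ →L[ℝ] E)
    (hcpt : IsCompact (closure (ι '' Metric.closedBall (0 : E₁) 1)))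
    (X : Set E₁) (hX : IsCompact X)
    (L : E₁ → E₁) (hLX : L '' X = X)
    (α : ℝ) (hα : 0 < α)
    (hsm : ∀ x₁ ∈ X, ∀ x₂ ∈ X, ‖L x₁ - L x₂‖ ≤ α * ‖ι x₁ - ι x₂‖)
    (hXne : X.Nonempty) {ε : ℝ} (hε : 0 < ε) :
    coveringNumber (ε/2) (ι '' X)
      ≤ coveringNumber (1 / (4 * α)) (ι '' Metric.closedBall (0 : E₁) 1)
        * coveringNumber ε (ι '' X) := by
  have htbB : TotallyBounded (ι '' Metric.closedBall (0 : E₁) 1) :=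
    (hcpt.totallyBounded).subset subset_closure
  have htbS : TotallyBounded (ι '' X) := (hX.image ι.continuous).totallyBounded
  have h4α : (0:ℝ) < 1 / (4 * α) := by positivity
  obtain ⟨s₀, hs₀c, hs₀⟩ := exists_min_cover htbB h4α
  obtain ⟨t, htc, hts⟩ := exists_min_cover htbS hε
  classical
  set r : ℝ := 2 * α * ε with hr
  have hrpos : 0 < r := by positivity
  -- choice of near point in X for each center
  have hp : ∀ x : E, ∃ p ∈ X, (∃ y ∈ X, ι y ∈ Metric.ball x ε) → ι p ∈ Metric.ball x ε := by
    intro x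
    by_cases h : ∃ y ∈ X, ι y ∈ Metric.ball x ε
    · obtain ⟨y, hy, hy'⟩ := h
      exact ⟨y, hy, fun _ => hy'⟩
    · exact ⟨hXne.choose, hXne.choose_spec, fun h' => absurd h' h⟩
  choose p hpX hpball using hp
  set u : Finset E := (t ×ˢ s₀).image (fun q => ι (L (p q.1)) + r • q.2) with hu
  have hcov : ι '' X ⊆ ⋃ c ∈ u, Metric.ball c (ε/2) := by
    rintro _ ⟨y', hy', rfl⟩
    rw [← hLX] at hy'
    obtain ⟨y, hy, rfl⟩ := hy'
    have := hts ⟨y, hy, rfl⟩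
    simp only [Set.mem_iUnion] at this
    obtain ⟨x, hx, hyx⟩ := this
    have hpb : ι (p x) ∈ Metric.ball x ε := hpball x ⟨y, hy, hyx⟩
    have hdist : ‖ι y - ι (p x)‖ < 2 * ε := by
      have := dist_triangle (ι y) x (ι (p x))
      rw [dist_eq_norm] at *
      have h1 : dist (ι y) x < ε := hyx
      have h2 : dist x (ι (p x)) < ε := by
        rw [dist_comm]; exact hpb
      calc ‖ι y - ι (p x)‖ = dist (ι y) (ι (p x)) := (dist_eq_norm _ _).symm
        _ ≤ dist (ι y) x + dist x (ι (p x)) := dist_triangle _ _ _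
        _ < ε + ε := add_lt_add h1 h2
        _ = 2 * ε := by ring
    have hL : ‖L y - L (p x)‖ < r := by
      calc ‖L y - L (p x)‖ ≤ α * ‖ι y - ι (p x)‖ := hsm y hy (p x) (hpX x)
        _ < α * (2 * ε) := by
            apply mul_lt_mul_of_pos_left hdist hα
        _ = r := by rw [hr]; ring
    set v : E₁ := r⁻¹ • (L y - L (p x)) with hv
    have hvball : v ∈ Metric.closedBall (0 : E₁) 1 := by
      simp only [Metric.mem_closedBall, dist_zero_right, hv, norm_smul, norm_inv,
        Real.norm_eq_abs, abs_of_pos hrpos]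
      rw [inv_mul_le_iff₀ hrpos, mul_one]
      exact hL.le
    have := hs₀ ⟨v, hvball, rfl⟩
    simp only [Set.mem_iUnion] at this
    obtain ⟨z, hz, hvz⟩ := this
    refine Set.mem_iUnion₂.2 ⟨ι (L (p x)) + r • z, ?_, ?_⟩
    · exact Finset.mem_image.2 ⟨(x, z), Finset.mem_product.2 ⟨hx, hz⟩, rfl⟩
    · rw [Metric.mem_ball, dist_eq_norm]
      have hιv : ι (L y) - ι (L (p x)) = r • ι v := by
        rw [hv, map_smul, smul_smul, mul_inv_cancel₀ hrpos.ne', one_smul, map_sub]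
      have : ι (L y) - (ι (L (p x)) + r • z) = r • (ι v - z) := by
        rw [smul_sub, ← hιv]; abel
      rw [this, norm_smul, Real.norm_eq_abs, abs_of_pos hrpos]
      have hvz' : ‖ι v - z‖ < 1 / (4 * α) := by
        rw [Metric.mem_ball, dist_eq_norm] at hvz; exact hvz
      calc r * ‖ι v - z‖ < r * (1 / (4 * α)) := mul_lt_mul_of_pos_left hvz' hrpos
        _ = ε / 2 := by field_simp [hr]; ring
  calc coveringNumber (ε/2) (ι '' X) ≤ u.card := coveringNumber_le_card hcov
    _ ≤ (t ×ˢ s₀).card := Finset.card_image_le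
    _ = coveringNumber ε (ι '' X) * coveringNumber (1 / (4 * α)) (ι '' Metric.closedBall (0 : E₁) 1) := by
        rw [Finset.card_product, htc, hs₀c]
    _ = _ := mul_comm _ _

end key

lemma coveringNumber_empty {E : Type*} [PseudoMetricSpace E] (ε : ℝ) :
    coveringNumber ε (∅ : Set E) = 0 :=
  Nat.sInf_eq_zero.2 (Or.inl ⟨∅, rfl, by simp⟩)


/-- The Kolmogorov `ε`-entropy `H_ε(S) = log₂ N_ε(S)`. -/
noncomputable def kolmogorovEntropy {E : Type*} [PseudoMetricSpace E] (ε : ℝ) (S : Set E) : ℝ :=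
  Real.logb 2 (coveringNumber ε S)

/-- The fractal (box-counting) dimension
`dim_F S = limsup_{ε→0⁺} log₂ N_ε(S) / log₂(1/ε)`. -/
noncomputable def fractalDim {E : Type*} [PseudoMetricSpace E] (S : Set E) : ℝ :=
  Filter.limsup (fun ε : ℝ => kolmogorovEntropy ε S / Real.logb 2 (1 / ε))
    (nhdsWithin 0 (Set.Ioi 0))

/-- **Finite fractal dimension via smoothing.** If `E₁` is compactly
embedded in `E` via `ι`, `X ⊆ E₁` is compact, and `L : X → X` satisfies `L(X) = X`
and `‖Lx₁ − Lx₂‖_{E₁} ≤ α ‖x₁ − x₂‖_E`, then the fractal dimension of `X` in `E`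
is at most the `1/(4α)`-entropy of the unit ball of `E₁` viewed in `E`. -/
theorem fractalDim_le_of_smoothing {E₁ E : Type*}
    [NormedAddCommGroup E₁] [NormedSpace ℝ E₁]
    [NormedAddCommGroup E] [NormedSpace ℝ E]
    (ι : E₁ →L[ℝ] E) (hinj : Function.Injective ι)
    (hcpt : IsCompact (closure (ι '' Metric.closedBall (0 : E₁) 1)))
    (X : Set E₁) (hX : IsCompact X)
    (L : E₁ → E₁) (hLX : L '' X = X)
    (α : ℝ) (hα : 0 < α)
    (hsm : ∀ x₁ ∈ X, ∀ x₂ ∈ X, ‖L x₁ - L x₂‖ ≤ α * ‖ι x₁ - ι x₂‖) :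
    fractalDim (ι '' X)
      ≤ kolmogorovEntropy (1 / (4 * α)) (ι '' Metric.closedBall (0 : E₁) 1) := by
  classical
  set B : Set E := ι '' Metric.closedBall (0 : E₁) 1 with hB
  set N₀ : ℕ := coveringNumber (1 / (4 * α)) B with hN₀
  set h : ℝ := Real.logb 2 N₀ with hh
  have htbB : TotallyBounded B := hcpt.totallyBounded.subset subset_closure
  have htbS : TotallyBounded (ι '' X) := (hX.image ι.continuous).totallyBounded
  have h4α : (0:ℝ) < 1 / (4 * α) := by positivity
  have hBne : B.Nonempty := ⟨ι 0, 0, by simp, rfl⟩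
  have hN₀1 : 1 ≤ N₀ := one_le_coveringNumber htbB h4α hBne
  have hh0 : 0 ≤ h := Real.logb_nonneg one_lt_two (by exact_mod_cast hN₀1)
  rcases X.eq_empty_or_nonempty with rfl | hXne
  · have : fractalDim (ι '' (∅ : Set E₁)) = 0 := by
      have : ∀ ε : ℝ, kolmogorovEntropy ε (ι '' (∅ : Set E₁)) = 0 := by
        intro ε
        simp [kolmogorovEntropy, Set.image_empty, _root_.coveringNumber_empty]
      simp only [fractalDim, this, zero_div]
      exact Filter.limsup_const 0
    rw [this]; exact hh0
  -- nonempty case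
  have hSne : (ι '' X).Nonempty := hXne.image _
  have hN1 : ∀ ε : ℝ, 0 < ε → 1 ≤ coveringNumber ε (ι '' X) := fun ε hε =>
    one_le_coveringNumber htbS hε hSne
  set C : ℝ := Real.logb 2 (coveringNumber 1 (ι '' X)) with hC
  have hC0 : 0 ≤ C := Real.logb_nonneg one_lt_two (by exact_mod_cast hN1 1 one_pos)
  -- iteration
  have hiter : ∀ k : ℕ, (coveringNumber ((1/2 : ℝ)^k) (ι '' X) : ℕ)
      ≤ N₀ ^ k * _root_.coveringNumber 1 (ι '' X) := by
    intro k
    induction k with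
    | zero => simp
    | succ k ih =>
      have hpk : (0:ℝ) < (1/2 : ℝ)^k := by positivity
      have hstep := key_step ι hcpt X hX L hLX α hα hsm hXne hpk
      have heq : ((1/2 : ℝ)^k) / 2 = (1/2 : ℝ)^(k+1) := by ring
      rw [heq] at hstep
      calc coveringNumber ((1/2 : ℝ)^(k+1)) (ι '' X)
          ≤ N₀ * coveringNumber ((1/2 : ℝ)^k) (ι '' X) := hstep
        _ ≤ N₀ * (N₀ ^ k * _root_.coveringNumber 1 (ι '' X)) := Nat.mul_le_mul_left _ ih
        _ = N₀ ^ (k+1) * _root_.coveringNumber 1 (ι '' X) := by ring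
  -- coboundedness
  have hcob : ∀ᶠ ε in nhdsWithin (0:ℝ) (Set.Ioi 0),
      (0:ℝ) ≤ kolmogorovEntropy ε (ι '' X) / Real.logb 2 (1 / ε) := by
    filter_upwards [Ioo_mem_nhdsGT_of_mem (by norm_num : (0:ℝ) ∈ Set.Ico (0:ℝ) 1)] with ε hε
    refine div_nonneg ?_ ?_
    · exact Real.logb_nonneg one_lt_two (by exact_mod_cast hN1 ε hε.1)
    · exact Real.logb_nonneg one_lt_two (by
        rw [le_div_iff₀ hε.1, one_mul]; exact hε.2.le)
  -- main bound
  refine le_of_forall_pos_le_add fun δ hδ => ?_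
  obtain ⟨K₀, hK₀⟩ := exists_nat_ge ((h + C) / δ)
  set K : ℕ := K₀ + 1 with hK
  have hKpos : (0:ℝ) < K := by positivity
  have hKbig : (h + C) / K ≤ δ := by
    have h1 : h + C ≤ (K₀:ℝ) * δ := by rw [div_le_iff₀ hδ] at hK₀; exact hK₀
    have h2 : (K₀:ℝ) ≤ (K:ℝ) := by exact_mod_cast Nat.le_succ K₀
    rw [div_le_iff₀ hKpos]
    nlinarith
  refine Filter.limsup_le_of_le (Filter.isCoboundedUnder_le_of_eventually_le _ hcob) ?_
  filter_upwards [Ioo_mem_nhdsGT_of_mem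
    (⟨le_refl 0, by positivity⟩ : (0:ℝ) ∈ Set.Ico (0:ℝ) ((1/2 : ℝ)^K))] with ε hε
  obtain ⟨hε0, hεK⟩ := hε
  -- find k with (1/2)^(k+1) < ε ≤ (1/2)^k and K ≤ k
  have hεlt1 : ε < 1 := lt_of_lt_of_le hεK (pow_le_one₀ (by norm_num) (by norm_num))
  have hex : ∃ n : ℕ, (1/2 : ℝ)^n < ε := exists_pow_lt_of_lt_one hε0 (by norm_num)
  set n₀ := Nat.find hex with hn₀
  have hn₀pos : n₀ ≠ 0 := by
    intro h0
    have := Nat.find_spec hex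
    rw [← hn₀, h0, pow_zero] at this
    linarith
  obtain ⟨k, hk⟩ : ∃ k, n₀ = k + 1 := ⟨n₀ - 1, by omega⟩
  have hlt : (1/2 : ℝ)^(k+1) < ε := by rw [← hk]; exact Nat.find_spec hex
  have hle : ε ≤ (1/2 : ℝ)^k := by
    have := Nat.find_min hex (by omega : k < n₀)
    linarith [not_lt.1 this]
  have hKk : K ≤ k := by
    by_contra hc
    push_neg at hc
    have : (1/2 : ℝ)^K ≤ (1/2 : ℝ)^(k+1) := by
      apply pow_le_pow_of_le_one (by norm_num) (by norm_num) (by omega)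
    linarith
  have hkpos : (0:ℝ) < k := lt_of_lt_of_le hKpos (by exact_mod_cast hKk)
  -- numerator bound
  have hNmono : coveringNumber ε (ι '' X) ≤ coveringNumber ((1/2:ℝ)^(k+1)) (ι '' X) :=
    coveringNumber_antitone htbS (by positivity) hlt.le
  have hnum : kolmogorovEntropy ε (ι '' X) ≤ (k+1 : ℝ) * h + C := by
    have hb : (coveringNumber ε (ι '' X) : ℝ) ≤ (N₀ : ℝ)^(k+1) * (coveringNumber 1 (ι '' X) : ℝ) := by
      exact_mod_cast le_trans hNmono (hiter (k+1))
    have hpos : (0:ℝ) < coveringNumber ε (ι '' X) := by exact_mod_cast hN1 ε hε0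
    have hc1 : (0:ℝ) < (coveringNumber 1 (ι '' X) : ℝ) := by exact_mod_cast hN1 1 one_pos
    have hN₀pos : (0:ℝ) < (N₀ : ℝ) := by exact_mod_cast hN₀1
    calc kolmogorovEntropy ε (ι '' X)
        ≤ Real.logb 2 ((N₀ : ℝ)^(k+1) * (coveringNumber 1 (ι '' X) : ℝ)) := by
          exact (Real.logb_le_logb one_lt_two hpos (mul_pos (pow_pos hN₀pos _) hc1)).2 hb
      _ = (k+1 : ℝ) * h + C := by
          rw [Real.logb_mul (pow_pos hN₀pos _).ne' hc1.ne', Real.logb_pow]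
          push_cast; rw [hh, hC]
  -- denominator bound
  have hden : (k : ℝ) ≤ Real.logb 2 (1 / ε) := by
    have h2k : (2:ℝ)^k ≤ 1/ε := by
      rw [le_div_iff₀ hε0]
      calc (2:ℝ)^k * ε ≤ (2:ℝ)^k * (1/2:ℝ)^k := by
            exact mul_le_mul_of_nonneg_left hle (by positivity)
        _ = 1 := by rw [← mul_pow]; norm_num
    calc (k : ℝ) = Real.logb 2 ((2:ℝ)^k) := by
          rw [Real.logb_pow]; norm_num
      _ ≤ Real.logb 2 (1/ε) := (Real.logb_le_logb one_lt_two (by positivity) (by positivity)).2 h2k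
  -- combine
  have hnum0 : 0 ≤ kolmogorovEntropy ε (ι '' X) :=
    Real.logb_nonneg one_lt_two (by exact_mod_cast hN1 ε hε0)
  calc kolmogorovEntropy ε (ι '' X) / Real.logb 2 (1 / ε)
      ≤ ((k+1 : ℝ) * h + C) / k := by
        apply div_le_div₀ (by positivity) hnum hkpos hden
    _ = h + (h + C) / k := by field_simp; ring
    _ ≤ h + (h + C) / K := by
        have := div_le_div_of_nonneg_left (by linarith : (0:ℝ) ≤ h + C) hKpos
          (by exact_mod_cast hKk : (K:ℝ) ≤ (k:ℝ))
        linarith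
    _ ≤ h + δ := by linarith [hKbig]
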